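/- arXiv:2603.11129 — 3 statements merged into one kernel-verified Lean document; each statement's English description precedes it below -/
import Mathlib

section
/- For every positive integer n, ∫_0^∞ n (ln x) e^{-x} (1 - e^{-x})^{n-1} dx = -γ + ∑_{j=1}^n (-1)^j C(n, j) ln j. -/
open Real MeasureTheory Finset

noncomputable def γ : ℝ := Real.eulerMascheroniConstant

open Set Filter Asymptotics in
lemma aux_bigO_top : (fun t : ℝ => Real.log t * Real.exp (-t)) =O[atTop] (· ^ (-(2:ℝ))) := by
  have hf : (fun t : ℝ => Real.exp (-t)) =O[atTop] (· ^ (-(3:ℝ))) := by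
    simpa only [neg_one_mul] using (isLittleO_exp_neg_mul_rpow_atTop zero_lt_one _).isBigO
  simpa only [smul_eq_mul] using isBigO_rpow_top_log_smul (by norm_num : (2:ℝ) < 3) hf

open Set Filter Asymptotics in
lemma aux_bigO_bot :
    (fun t : ℝ => Real.log t * Real.exp (-t)) =O[nhdsWithin 0 (Ioi 0)] (· ^ (-(1/2:ℝ))) := by
  have hf : (fun t : ℝ => Real.exp (-t)) =O[nhdsWithin 0 (Ioi 0)] (· ^ (-(0:ℝ))) := by
    refine IsBigO.of_bound 1 ?_
    filter_upwards [self_mem_nhdsWithin] with t ht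
    simp only [neg_zero, Real.rpow_zero, norm_one, one_mul, Real.norm_eq_abs,
      abs_of_pos (Real.exp_pos _)]
    exact Real.exp_le_one_iff.mpr (by simpa using (le_of_lt ht))
  simpa only [smul_eq_mul] using isBigO_rpow_zero_log_smul (by norm_num : (0:ℝ) < 1/2) hf

open Set in
lemma aux_integrable : IntegrableOn (fun t : ℝ => Real.log t * Real.exp (-t)) (Ioi 0) := by
  have hc : LocallyIntegrableOn (fun t : ℝ => Real.log t * Real.exp (-t)) (Ioi 0) := by
    refine ContinuousOn.locallyIntegrableOn ?_ measurableSet_Ioi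
    exact (Real.continuousOn_log.mono (fun x hx => ne_of_gt hx)).mul
      (Real.continuous_exp.comp continuous_neg).continuousOn
  have := mellin_convergent_of_isBigO_scalar (s := 1) hc aux_bigO_top (by norm_num)
    aux_bigO_bot (by norm_num)
  simpa using this

open Set in
lemma aux_integral_log_exp : ∫ t in Ioi (0:ℝ), Real.log t * Real.exp (-t) = -γ := by
  have h1 := Complex.hasDerivAt_GammaIntegral (s := 1) (by norm_num)
  have h2 : (∫ t : ℝ in Ioi 0, (t:ℂ) ^ ((1:ℂ) - 1) * (Real.log t * Real.exp (-t)))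
      = ((∫ t in Ioi (0:ℝ), Real.log t * Real.exp (-t) : ℝ) : ℂ) := by
    rw [show (∫ t : ℝ in Ioi 0, (t:ℂ) ^ ((1:ℂ) - 1) * (Real.log t * Real.exp (-t)))
        = ∫ t in Ioi (0:ℝ), ((Real.log t * Real.exp (-t) : ℝ) : ℂ) from
      setIntegral_congr_fun measurableSet_Ioi (fun t ht => by push_cast; simp)]
    exact integral_ofReal
  rw [h2] at h1
  have hev : Complex.Gamma =ᶠ[nhds (1:ℂ)] Complex.GammaIntegral := by
    have hopen : IsOpen {s : ℂ | 0 < s.re} := isOpen_lt continuous_const Complex.continuous_re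
    filter_upwards [hopen.mem_nhds (by norm_num : (0:ℝ) < (1:ℂ).re)] with s hs
    exact Complex.Gamma_eq_integral hs
  have h3 : HasDerivAt Complex.Gamma
      ((∫ t in Ioi (0:ℝ), Real.log t * Real.exp (-t) : ℝ) : ℂ) 1 :=
    h1.congr_of_eventuallyEq hev
  have h4 := h3.unique Complex.hasDerivAt_Gamma_one
  have : ((∫ t in Ioi (0:ℝ), Real.log t * Real.exp (-t) : ℝ) : ℂ) = ((-γ : ℝ) : ℂ) := by
    rw [h4]; simp [γ]
  exact_mod_cast this

open Set in
lemma aux_exp_integrable {c : ℝ} (hc : 0 < c) :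
    IntegrableOn (fun t : ℝ => Real.exp (-(c * t))) (Ioi 0) := by
  have := exp_neg_integrableOn_Ioi 0 hc
  simpa [neg_mul] using this

open Set in
lemma aux_integrable_mul {c : ℝ} (hc : 0 < c) :
    IntegrableOn (fun t : ℝ => Real.log t * Real.exp (-(c * t))) (Ioi 0) := by
  have h0 : IntegrableOn (fun u : ℝ => Real.log u * Real.exp (-u)) (Ioi (c * 0)) := by
    rw [mul_zero]; exact aux_integrable
  have h1 : IntegrableOn (fun t : ℝ => Real.log (c * t) * Real.exp (-(c * t))) (Ioi 0) :=
    (integrableOn_Ioi_comp_mul_left_iff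
      (fun u : ℝ => Real.log u * Real.exp (-u)) 0 hc).mpr h0
  have h2 : IntegrableOn (fun t : ℝ => Real.log c * Real.exp (-(c * t))) (Ioi 0) :=
    (aux_exp_integrable hc).const_mul _
  have h3 : IntegrableOn (fun t : ℝ => Real.log (c * t) * Real.exp (-(c * t))
      - Real.log c * Real.exp (-(c * t))) (Ioi 0) := h1.sub h2
  refine IntegrableOn.congr_fun h3 (fun t ht => ?_) measurableSet_Ioi
  rw [Real.log_mul hc.ne' (ne_of_gt ht)]
  ring

open Set in
lemma aux_integral_log_exp_mul {c : ℝ} (hc : 0 < c) :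
    ∫ t in Ioi (0:ℝ), Real.log t * Real.exp (-(c * t)) = (-γ - Real.log c) / c := by
  have h := integral_comp_mul_left_Ioi (fun u : ℝ => Real.log u * Real.exp (-u)) 0 hc
  rw [mul_zero, aux_integral_log_exp, smul_eq_mul] at h
  have h2 : ∫ x in Ioi (0:ℝ), Real.log (c * x) * Real.exp (-(c * x))
      = (∫ x in Ioi (0:ℝ), Real.log c * Real.exp (-(c * x)))
        + ∫ x in Ioi (0:ℝ), Real.log x * Real.exp (-(c * x)) := by
    rw [← integral_add ((aux_exp_integrable hc).const_mul _) (aux_integrable_mul hc)]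
    refine setIntegral_congr_fun measurableSet_Ioi (fun t ht => ?_)
    rw [Real.log_mul hc.ne' (ne_of_gt ht)]
    ring
  have h3 : ∫ x in Ioi (0:ℝ), Real.exp (-(c * x)) = 1 / c := by
    have := integral_comp_mul_left_Ioi (fun u : ℝ => Real.exp (-u)) 0 hc
    rw [mul_zero, integral_exp_neg_Ioi_zero, smul_eq_mul] at this
    rw [this]; ring
  rw [integral_const_mul, h3] at h2
  have h5 : Real.log c * (1 / c) + (∫ x in Ioi (0:ℝ), Real.log x * Real.exp (-(c * x)))
      = c⁻¹ * (-γ) := by rw [← h2, ← h]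
  field_simp at h5 ⊢
  linarith

lemma poly_id (m : ℕ) (y : ℝ) :
    ∑ j ∈ Finset.Icc 1 (m+1), (-1:ℝ)^(j+1) * (j:ℝ) * ((m+1).choose j : ℝ) * y^j
      = ((m:ℝ)+1) * y * (1 - y)^m := by
  rw [show Finset.Icc 1 (m+1) = Finset.Ico 1 (m+2) from (Finset.Ico_add_one_right_eq_Icc (a := 1) (b := m+1)).symm]
  rw [Finset.sum_Ico_eq_sum_range]
  rw [show m + 2 - 1 = m + 1 by omega]
  have h2 : ∀ i ∈ Finset.range (m+1),
      (-1:ℝ)^((1+i)+1) * ((1+i : ℕ):ℝ) * (((m+1).choose (1+i)) : ℝ) * y^(1+i)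
      = ((m:ℝ)+1) * y * ((-y)^i * (1:ℝ)^(m-i) * (m.choose i : ℝ)) := by
    intro i _
    have hc : (((m+1).choose (i+1)) : ℝ) * ((i:ℝ)+1) = ((m:ℝ)+1) * (m.choose i : ℝ) := by
      exact_mod_cast (Nat.add_one_mul_choose_eq m i).symm
    rw [add_comm 1 i]
    push_cast
    rw [neg_pow, one_pow]
    linear_combination ((-1:ℝ)^i * y^i * y) * hc
  rw [Finset.sum_congr rfl h2, ← Finset.mul_sum, ← add_pow]
  ring_nf

lemma aux_alt_sum (m : ℕ) :
    ∑ j ∈ Finset.Icc 1 (m+1), (-1:ℝ)^j * ((m+1).choose j : ℝ) = -1 := by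
  have h0 := Int.alternating_sum_range_choose_of_ne (n := m+1) (by omega)
  have h0' : ∑ i ∈ Finset.range (m+2), (-1:ℝ)^i * ((m+1).choose i : ℝ) = 0 := by
    exact_mod_cast h0
  rw [Finset.sum_range_succ'] at h0'
  simp only [pow_zero, Nat.choose_zero_right, Nat.cast_one, one_mul, mul_one] at h0'
  rw [show Finset.Icc 1 (m+1) = Finset.Ico 1 (m+2) from (Finset.Ico_add_one_right_eq_Icc (a := 1) (b := m+1)).symm,
    Finset.sum_Ico_eq_sum_range, show m + 2 - 1 = m + 1 by omega]
  have : ∑ i ∈ Finset.range (m+1), (-1:ℝ)^(1+i) * ((m+1).choose (1+i) : ℝ)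
      = ∑ i ∈ Finset.range (m+1), (-1:ℝ)^(i+1) * ((m+1).choose (i+1) : ℝ) := by
    refine Finset.sum_congr rfl (fun i _ => by rw [add_comm 1 i])
  rw [this]
  linarith

theorem stmt5 (n : ℕ) (hn : 1 ≤ n) :
    ∫ x in Set.Ioi (0:ℝ), (n : ℝ) * Real.log x * Real.exp (-x) * (1 - Real.exp (-x)) ^ (n - 1)
      = -γ + ∑ j ∈ Finset.Icc 1 n, (-1 : ℝ) ^ j * (n.choose j : ℝ) * Real.log j := by
  obtain ⟨m, rfl⟩ : ∃ m, n = m + 1 := ⟨n - 1, by omega⟩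
  have hpt : ∀ x ∈ Set.Ioi (0:ℝ),
      ((m+1 : ℕ) : ℝ) * Real.log x * Real.exp (-x) * (1 - Real.exp (-x)) ^ (m+1-1)
      = ∑ j ∈ Finset.Icc 1 (m+1),
          (-1:ℝ)^(j+1) * (j:ℝ) * ((m+1).choose j : ℝ) * (Real.log x * Real.exp (-((j:ℝ) * x))) := by
    intro x _
    have hp := poly_id m (Real.exp (-x))
    have he : ∀ j : ℕ, Real.exp (-((j:ℝ) * x)) = (Real.exp (-x))^j := by
      intro j
      rw [← Real.exp_nat_mul]
      ring_nf
    calc ((m+1 : ℕ) : ℝ) * Real.log x * Real.exp (-x) * (1 - Real.exp (-x)) ^ (m+1-1)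
        = Real.log x * (((m:ℝ)+1) * Real.exp (-x) * (1 - Real.exp (-x)) ^ m) := by
          simp only [Nat.add_sub_cancel]; push_cast; ring
      _ = Real.log x * ∑ j ∈ Finset.Icc 1 (m+1),
            (-1:ℝ)^(j+1) * (j:ℝ) * ((m+1).choose j : ℝ) * (Real.exp (-x))^j := by
          rw [hp]
      _ = _ := by
          rw [Finset.mul_sum]
          refine Finset.sum_congr rfl (fun j _ => ?_)
          rw [he j]; ring
  rw [setIntegral_congr_fun measurableSet_Ioi hpt]
  have hInt : ∀ j ∈ Finset.Icc 1 (m+1), IntegrableOn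
      (fun x : ℝ => (-1:ℝ)^(j+1) * (j:ℝ) * ((m+1).choose j : ℝ)
        * (Real.log x * Real.exp (-((j:ℝ) * x)))) (Set.Ioi 0) := by
    intro j hj
    have hj0 : (0:ℝ) < j := by
      have := (Finset.mem_Icc.mp hj).1
      exact_mod_cast Nat.lt_of_lt_of_le Nat.zero_lt_one this
    exact (aux_integrable_mul hj0).const_mul _
  rw [integral_finset_sum _ hInt]
  have hval : ∀ j ∈ Finset.Icc 1 (m+1),
      (∫ x in Set.Ioi (0:ℝ), (-1:ℝ)^(j+1) * (j:ℝ) * ((m+1).choose j : ℝ)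
        * (Real.log x * Real.exp (-((j:ℝ) * x))))
      = γ * ((-1:ℝ)^j * ((m+1).choose j : ℝ))
        + (-1:ℝ)^j * ((m+1).choose j : ℝ) * Real.log j := by
    intro j hj
    have hj1 : 1 ≤ j := (Finset.mem_Icc.mp hj).1
    have hj0 : (0:ℝ) < j := by exact_mod_cast Nat.lt_of_lt_of_le Nat.zero_lt_one hj1
    rw [integral_const_mul, aux_integral_log_exp_mul hj0]
    rw [pow_succ]
    field_simp
    ring
  rw [Finset.sum_congr rfl hval, Finset.sum_add_distrib, ← Finset.mul_sum, aux_alt_sum m]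
  ring
end

section
/- For every positive integer n, E[ln W] = -γ + ∑_{j=1}^n (-1)^j C(n,j) ln j = -n c_n − γ, where W is the maximum of n i.i.d. Exponential(1) random variables. -/
open Real MeasureTheory Finset Set Filter Topology

lemma mellin_pair :
    MellinConvergent (fun t => Real.log t • ((Real.exp (-t) : ℝ) : ℂ)) 1 ∧
      HasDerivAt (mellin (fun t : ℝ => ((Real.exp (-t) : ℝ) : ℂ)))
        (mellin (fun t => Real.log t • ((Real.exp (-t) : ℝ) : ℂ)) 1) 1 := by
  refine mellin_hasDerivAt_of_isBigO_rpow (a := 2) (b := 0) ?_ ?_ ?_ ?_ ?_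
  · exact (Complex.continuous_ofReal.comp (Real.continuous_exp.comp continuous_neg)).continuousOn.locallyIntegrableOn measurableSet_Ioi
  · rw [← Asymptotics.isBigO_norm_left]
    simp_rw [Complex.norm_real,
      Asymptotics.isBigO_norm_left]
    simpa only [neg_one_mul] using
      (isLittleO_exp_neg_mul_rpow_atTop zero_lt_one _).isBigO
  · norm_num
  · simp_rw [neg_zero, Real.rpow_zero]
    refine Asymptotics.isBigO_const_of_tendsto (?_ : Tendsto _ _ (𝓝 (1 : ℂ))) one_ne_zero
    rw [(by simp : (1 : ℂ) = Real.exp (-0))]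
    exact (Complex.continuous_ofReal.comp
      (Real.continuous_exp.comp continuous_neg)).continuousWithinAt
  · norm_num

lemma integrableA : IntegrableOn (fun t => Real.log t * Real.exp (-t)) (Ioi 0) := by
  have h := mellin_pair.1
  unfold MellinConvergent at h
  simp only [sub_self, Complex.cpow_zero, one_smul] at h
  have : (fun t : ℝ => Real.log t • ((Real.exp (-t) : ℝ) : ℂ))
      = fun t : ℝ => ((Real.log t * Real.exp (-t) : ℝ) : ℂ) := by
    ext t; simp [Complex.real_smul]
  rw [this] at h
  have h2 := h.re
  refine h2.congr ?_
  filter_upwards with t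
  simp [← Complex.ofReal_neg, ← Complex.ofReal_exp]

lemma integralA : (∫ t in Ioi (0:ℝ), Real.log t * Real.exp (-t)) = -γ := by
  have h1 : HasDerivAt Complex.GammaIntegral
      (∫ t : ℝ in Ioi 0, (t : ℂ) ^ ((1:ℂ) - 1) * (Real.log t * Real.exp (-t))) 1 :=
    Complex.hasDerivAt_GammaIntegral (by norm_num)
  have h2 : HasDerivAt Complex.GammaIntegral (-(γ:ℂ)) 1 := by
    refine Complex.hasDerivAt_Gamma_one.congr_of_eventuallyEq ?_
    have hopen : {s : ℂ | 0 < s.re} ∈ 𝓝 (1:ℂ) := by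
      refine (isOpen_lt continuous_const Complex.continuous_re).mem_nhds (by norm_num)
    filter_upwards [hopen] with s hs
    exact (Complex.Gamma_eq_integral hs).symm
  have h3 := h1.unique h2
  have h4 : (∫ t : ℝ in Ioi 0, (t : ℂ) ^ ((1:ℂ) - 1) * (Real.log t * Real.exp (-t)))
      = ((∫ t in Ioi (0:ℝ), Real.log t * Real.exp (-t) : ℝ) : ℂ) := by
    rw [show (fun t : ℝ => (t : ℂ) ^ ((1:ℂ) - 1) * (Real.log t * Real.exp (-t)))
        = fun t : ℝ => ((Real.log t * Real.exp (-t) : ℝ) : ℂ) by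
      ext t; simp]
    exact integral_ofReal
  rw [h4] at h3
  exact_mod_cast h3

lemma integrableB {a : ℝ} (ha : 0 < a) :
    IntegrableOn (fun x => Real.log x * Real.exp (-(a*x))) (Ioi 0) := by
  have h1 : IntegrableOn (fun x => Real.log (a*x) * Real.exp (-(a*x))) (Ioi 0) := by
    have := (integrableOn_Ioi_comp_mul_left_iff (fun t => Real.log t * Real.exp (-t)) 0 ha).mpr
      (by simpa using integrableA)
    simpa using this
  have h2 : IntegrableOn (fun x => Real.log a * Real.exp (-(a*x))) (Ioi 0) := by
    have := (exp_neg_integrableOn_Ioi 0 ha).const_mul (Real.log a)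
    simp only [neg_mul] at this
    exact this
  refine IntegrableOn.congr_fun (h1.sub h2) ?_ measurableSet_Ioi
  intro x hx
  simp only [Pi.sub_apply]
  rw [Real.log_mul ha.ne' (ne_of_gt hx)]
  ring

lemma integralB {a : ℝ} (ha : 0 < a) :
    (∫ x in Ioi (0:ℝ), Real.log x * Real.exp (-(a*x))) = (-γ - Real.log a) / a := by
  have key : (∫ x in Ioi (0:ℝ), Real.log x * Real.exp (-(a*x)))
      = ∫ x in Ioi (0:ℝ),
          (Real.log (a*x) * Real.exp (-(a*x)) - Real.log a * Real.exp (-(a*x))) := by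
    refine setIntegral_congr_fun measurableSet_Ioi ?_
    intro x hx
    simp only
    rw [Real.log_mul ha.ne' (ne_of_gt hx)]
    ring
  have h1 : IntegrableOn (fun x => Real.log (a*x) * Real.exp (-(a*x))) (Ioi 0) := by
    have := (integrableOn_Ioi_comp_mul_left_iff (fun t => Real.log t * Real.exp (-t)) 0 ha).mpr
      (by simpa using integrableA)
    simpa using this
  have h2 : IntegrableOn (fun x => Real.log a * Real.exp (-(a*x))) (Ioi 0) := by
    have := (exp_neg_integrableOn_Ioi 0 ha).const_mul (Real.log a)
    simp only [neg_mul] at this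
    exact this
  rw [key, integral_sub h1 h2]
  have e1 : (∫ x in Ioi (0:ℝ), Real.log (a*x) * Real.exp (-(a*x)))
      = a⁻¹ • ∫ t in Ioi (0:ℝ), Real.log t * Real.exp (-t) := by
    have := integral_comp_mul_left_Ioi (fun t => Real.log t * Real.exp (-t)) 0 ha
    simpa using this
  have e2 : (∫ x in Ioi (0:ℝ), Real.log a * Real.exp (-(a*x)))
      = Real.log a * a⁻¹ := by
    rw [integral_const_mul]
    have := integral_comp_mul_left_Ioi (fun t => Real.exp (-t)) 0 ha
    simp only [mul_zero] at this
    rw [this, integral_exp_neg_Ioi_zero, smul_eq_mul, mul_one]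
  rw [e1, e2, integralA, smul_eq_mul]
  field_simp

lemma altsum {n : ℕ} (hn : 1 ≤ n) :
    ∑ k ∈ range n, (-1:ℝ)^(k+1) * (n.choose (k+1) : ℝ) = -1 := by
  have h := Int.alternating_sum_range_choose_of_ne (Nat.one_le_iff_ne_zero.mp hn)
  have h' : (∑ i ∈ range (n + 1), (-1:ℝ) ^ i * (n.choose i : ℝ)) = 0 := by
    exact_mod_cast congrArg (fun z : ℤ => (z : ℝ)) h
  rw [Finset.sum_range_succ'] at h'
  simp only [pow_zero, Nat.choose_zero_right, Nat.cast_one, one_mul] at h'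
  linarith

theorem stmt11 (n : ℕ) (hn : 1 ≤ n)
    (c : ℝ)
    (hc : c = -(1 / (n : ℝ)) * ∑ j ∈ Finset.Icc 1 n, (-1 : ℝ) ^ j * (n.choose j : ℝ) * Real.log j) :
    (∫ x in Set.Ioi (0:ℝ), Real.log x * ((n : ℝ) * Real.exp (-x) * (1 - Real.exp (-x)) ^ (n - 1)))
      = -γ + ∑ j ∈ Finset.Icc 1 n, (-1 : ℝ) ^ j * (n.choose j : ℝ) * Real.log j ∧
    (∫ x in Set.Ioi (0:ℝ), Real.log x * ((n : ℝ) * Real.exp (-x) * (1 - Real.exp (-x)) ^ (n - 1)))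
      = -(n : ℝ) * c - γ := by
  have hn0 : (n:ℝ) ≠ 0 := Nat.cast_ne_zero.mpr (Nat.one_le_iff_ne_zero.mp hn)
  -- pointwise expansion
  have hpt : ∀ x : ℝ,
      Real.log x * ((n : ℝ) * Real.exp (-x) * (1 - Real.exp (-x)) ^ (n - 1))
      = ∑ k ∈ range n, ((-1:ℝ)^k * ((n:ℝ) * ((n-1).choose k : ℝ)))
          * (Real.log x * Real.exp (-(((k:ℝ)+1)*x))) := by
    intro x
    have hb : (1 - Real.exp (-x)) ^ (n - 1)
        = ∑ k ∈ range n, (-1:ℝ)^k * (Real.exp (-x))^k * ((n-1).choose k : ℝ) := by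
      rw [show (1 - Real.exp (-x)) = (-Real.exp (-x)) + 1 by ring, add_pow,
        show n - 1 + 1 = n from Nat.succ_pred_eq_of_pos hn]
      refine Finset.sum_congr rfl fun k hk => ?_
      rw [one_pow, neg_pow]
      ring
    rw [hb, Finset.mul_sum, Finset.mul_sum]
    refine Finset.sum_congr rfl fun k hk => ?_
    have he : Real.exp (-(((k:ℝ)+1)*x)) = Real.exp (-x) * (Real.exp (-x))^k := by
      rw [← Real.exp_nat_mul, ← Real.exp_add]
      congr 1
      ring
    rw [he]
    ring
  have hint : (∫ x in Set.Ioi (0:ℝ),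
      Real.log x * ((n : ℝ) * Real.exp (-x) * (1 - Real.exp (-x)) ^ (n - 1)))
      = ∑ k ∈ range n, ((-1:ℝ)^k * ((n:ℝ) * ((n-1).choose k : ℝ)))
          * ((-γ - Real.log ((k:ℝ)+1)) / ((k:ℝ)+1)) := by
    rw [show (fun x => Real.log x * ((n : ℝ) * Real.exp (-x) * (1 - Real.exp (-x)) ^ (n - 1)))
        = fun x => ∑ k ∈ range n, ((-1:ℝ)^k * ((n:ℝ) * ((n-1).choose k : ℝ)))
          * (Real.log x * Real.exp (-(((k:ℝ)+1)*x))) from funext hpt]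
    rw [integral_finset_sum _ (fun k _ => (integrableB (by positivity)).const_mul _)]
    refine Finset.sum_congr rfl fun k hk => ?_
    rw [integral_const_mul, integralB (by positivity : (0:ℝ) < (k:ℝ)+1)]
  -- combinatorial identity for coefficients
  have hcoef : ∀ k : ℕ, (n:ℝ) * ((n-1).choose k : ℝ) = (n.choose (k+1) : ℝ) * ((k:ℝ)+1) := by
    intro k
    have h2 : n - 1 + 1 = n := Nat.succ_pred_eq_of_pos hn
    have := Nat.add_one_mul_choose_eq (n-1) k
    simp only [Nat.succ_eq_add_one, h2] at this
    exact_mod_cast congrArg (fun m : ℕ => (m:ℝ)) this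
  have hterm : ∀ k ∈ range n, ((-1:ℝ)^k * ((n:ℝ) * ((n-1).choose k : ℝ)))
          * ((-γ - Real.log ((k:ℝ)+1)) / ((k:ℝ)+1))
      = (-1:ℝ)^(k+1) * (n.choose (k+1) : ℝ) * γ
        + (-1:ℝ)^(k+1) * (n.choose (k+1) : ℝ) * Real.log ((k:ℝ)+1) := by
    intro k _
    rw [hcoef k]
    have hk1 : ((k:ℝ)+1) ≠ 0 := by positivity
    field_simp
    ring
  have hS : (∑ j ∈ Finset.Icc 1 n, (-1 : ℝ) ^ j * (n.choose j : ℝ) * Real.log j)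
      = ∑ k ∈ range n, (-1:ℝ)^(k+1) * (n.choose (k+1) : ℝ) * Real.log ((k:ℝ)+1) := by
    rw [show Finset.Icc 1 n = Finset.Ico 1 (n+1) by rw [Finset.Ico_add_one_right_eq_Icc],
      Finset.sum_Ico_eq_sum_range]
    simp only [Nat.add_sub_cancel]
    refine Finset.sum_congr rfl fun k hk => ?_
    rw [add_comm 1 k]
    push_cast
    ring_nf
  have main : (∫ x in Set.Ioi (0:ℝ),
      Real.log x * ((n : ℝ) * Real.exp (-x) * (1 - Real.exp (-x)) ^ (n - 1)))
      = -γ + ∑ j ∈ Finset.Icc 1 n, (-1 : ℝ) ^ j * (n.choose j : ℝ) * Real.log j := by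
    rw [hint, Finset.sum_congr rfl hterm, Finset.sum_add_distrib, hS]
    congr 1
    rw [← Finset.sum_mul, altsum hn]
    ring
  refine ⟨main, ?_⟩
  rw [main, hc]
  field_simp
  ring
end

section
/- For every positive integer n, ∑_{k=0}^{n-1} (-1)^k C(n-1, k) (γ + ln(k+1))/(k+1) = (1/n)(γ − ∑_{j=1}^n (-1)^j C(n, j) ln j). -/
open Real MeasureTheory Finset

lemma choose_div_aux (m k : ℕ) :
    ((m.choose k : ℝ)) / ((k : ℝ) + 1) = (((m+1).choose (k+1) : ℝ)) / ((m : ℝ) + 1) := by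
  have h := Nat.add_one_mul_choose_eq m k
  have h' : ((m : ℝ) + 1) * (m.choose k : ℝ) = ((m+1).choose (k+1) : ℝ) * ((k : ℝ) + 1) := by
    exact_mod_cast h
  have hk : ((k : ℝ) + 1) ≠ 0 := by positivity
  have hm : ((m : ℝ) + 1) ≠ 0 := by positivity
  field_simp
  linarith [h']

lemma alt_sum_aux (m : ℕ) :
    ∑ k ∈ Finset.range (m+1), (-1 : ℝ) ^ k * (((m+1).choose (k+1) : ℝ)) = 1 := by
  have h := Int.alternating_sum_range_choose (n := m+1)
  rw [if_neg (Nat.succ_ne_zero m)] at h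
  have h' : ∑ i ∈ Finset.range (m+2), (-1 : ℝ) ^ i * (((m+1).choose i : ℝ)) = 0 := by
    exact_mod_cast h
  rw [Finset.sum_range_succ' (fun i => (-1 : ℝ) ^ i * (((m+1).choose i : ℝ))) (m+1)] at h'
  simp only [pow_succ, pow_zero, Nat.choose_zero_right, Nat.cast_one, one_mul, mul_one] at h'
  have : ∑ k ∈ Finset.range (m+1), (-1 : ℝ) ^ k * (-1) * (((m+1).choose (k+1) : ℝ)) = -1 := by
    linarith [h']
  calc ∑ k ∈ Finset.range (m+1), (-1 : ℝ) ^ k * (((m+1).choose (k+1) : ℝ))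
      = -∑ k ∈ Finset.range (m+1), (-1 : ℝ) ^ k * (-1) * (((m+1).choose (k+1) : ℝ)) := by
        rw [← Finset.sum_neg_distrib]; apply Finset.sum_congr rfl; intro x _; ring
    _ = 1 := by rw [this]; ring

theorem stmt12 (n : ℕ) (hn : 1 ≤ n) :
    ∑ k ∈ Finset.range n, (-1 : ℝ) ^ k * ((n - 1).choose k : ℝ) * (γ + Real.log ((k : ℝ) + 1)) / ((k : ℝ) + 1)
      = (1 / (n : ℝ)) * (γ - ∑ j ∈ Finset.Icc 1 n, (-1 : ℝ) ^ j * (n.choose j : ℝ) * Real.log j) := by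
  obtain ⟨m, rfl⟩ : ∃ m, n = m + 1 := ⟨n - 1, (Nat.succ_pred_eq_of_pos hn).symm⟩
  have hIcc : Finset.Icc 1 (m+1) = Finset.Ico 1 (m+2) := by
    ext x; simp [Nat.lt_succ_iff]
  rw [hIcc, Finset.sum_Ico_eq_sum_range]
  simp only [Nat.add_sub_cancel, Nat.add_sub_cancel_left]
  -- now RHS sum is over range (m+1) with index 1+k
  have hm : ((m : ℝ) + 1) ≠ 0 := by positivity
  have step1 : ∑ k ∈ Finset.range (m+1),
      (-1 : ℝ) ^ k * ((m).choose k : ℝ) * (γ + Real.log ((k : ℝ) + 1)) / ((k : ℝ) + 1)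
      = ∑ k ∈ Finset.range (m+1),
      (-1 : ℝ) ^ k * (((m+1).choose (k+1) : ℝ)) * (γ + Real.log ((k : ℝ) + 1)) / ((m : ℝ) + 1) := by
    apply Finset.sum_congr rfl
    intro k _
    have hb := choose_div_aux m k
    have hk : ((k : ℝ) + 1) ≠ 0 := by positivity
    field_simp at hb ⊢
    linear_combination (γ + Real.log ((k:ℝ)+1)) * hb
  rw [step1, ← Finset.sum_div, one_div, inv_mul_eq_div]
  congr 1
  have expand : ∑ k ∈ Finset.range (m+1),
      (-1 : ℝ) ^ k * (((m+1).choose (k+1) : ℝ)) * (γ + Real.log ((k : ℝ) + 1))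
      = (∑ k ∈ Finset.range (m+1), (-1 : ℝ) ^ k * (((m+1).choose (k+1) : ℝ))) * γ
        + ∑ k ∈ Finset.range (m+1), (-1 : ℝ) ^ k * (((m+1).choose (k+1) : ℝ)) * Real.log ((k : ℝ) + 1) := by
    rw [Finset.sum_mul, ← Finset.sum_add_distrib]
    apply Finset.sum_congr rfl
    intros; ring
  rw [expand, alt_sum_aux m, one_mul, sub_eq_add_neg, ← Finset.sum_neg_distrib]
  congr 1
  apply Finset.sum_congr rfl
  intro k _
  have : ((1 + k : ℕ) : ℝ) = (k : ℝ) + 1 := by push_cast; ring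
  rw [this]
  have hc : (m+1).choose (1+k) = (m+1).choose (k+1) := by rw [Nat.add_comm 1 k]
  rw [hc, pow_add]
  ring
  push_cast
  ring
end
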